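/- arXiv:2405.09248 — 2 statements merged into one kernel-verified Lean document; each statement's English description precedes it below -/
import Mathlib

section
/- Let n ≥ 1, let A = (a_{mk}) and B = (b_{mk}) be n×n real symmetric positive definite matrices, let t ∈ (0,1), and let l₁,…,lₙ and r₁,…,rₙ be positive real numbers. Define the positive definite matrices Ã = (a_{mk} l_m l_k) and B̃ = (b_{mk} r_m r_k), and for each i set s_i = ((1−t)/l_i + t/r_i)⁻¹ (the weighted harmonic mean of l_i and r_i). Then ((1−t)·Ã⁻¹ + t·B̃⁻¹)⁻¹ ≤ C in the Loewner order, where C is the matrix with entries C_{mk} = ((1−t)a_{mk} + t b_{mk}) s_m s_k. -/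
open Matrix

lemma aux_smul_posDef {n : ℕ} {c : ℝ} (hc : 0 < c) {M : Matrix (Fin n) (Fin n) ℝ}
    (hM : M.PosDef) : (c • M).PosDef := by
  refine posDef_iff_dotProduct_mulVec.mpr ⟨?_, fun x hx => ?_⟩
  · unfold Matrix.IsHermitian
    rw [conjTranspose_smul, hM.isHermitian.eq]
    simp
  · rw [smul_mulVec, dotProduct_smul, smul_eq_mul]
    exact mul_pos hc (by simpa using hM.dotProduct_mulVec_pos hx)

lemma aux_smul_posSemidef {m : Type*} [Fintype m] {c : ℝ} (hc : 0 ≤ c) {M : Matrix m m ℝ}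
    (hM : M.PosSemidef) : (c • M).PosSemidef := by
  refine posSemidef_iff_dotProduct_mulVec.mpr ⟨?_, fun x => ?_⟩
  · unfold Matrix.IsHermitian
    rw [conjTranspose_smul, hM.isHermitian.eq]
    simp
  · rw [smul_mulVec, dotProduct_smul, smul_eq_mul]
    exact mul_nonneg hc (by simpa using (posSemidef_iff_dotProduct_mulVec.mp hM).2 x)

lemma aux_diag_mul_mul_posDef {n : ℕ} {M : Matrix (Fin n) (Fin n) ℝ} (hM : M.PosDef)
    {d : Fin n → ℝ} (hd : ∀ i, 0 < d i) :
    (Matrix.diagonal d * M * Matrix.diagonal d).PosDef := by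
  have hHerm : (Matrix.diagonal d * M * Matrix.diagonal d).IsHermitian := by
    unfold Matrix.IsHermitian
    simp only [conjTranspose_mul, diagonal_conjTranspose, hM.isHermitian.eq]
    simp [Matrix.mul_assoc, star_trivial]
  refine posDef_iff_dotProduct_mulVec.mpr ⟨hHerm, fun x hx => ?_⟩
  have hDx : (Matrix.diagonal d) *ᵥ x ≠ 0 := by
    intro h
    apply hx
    funext i
    have := congrFun h i
    simp [mulVec_diagonal] at this
    rcases this with h1 | h1
    · exact absurd h1 (hd i).ne'
    · exact h1
  have key : star x ⬝ᵥ (Matrix.diagonal d * M * Matrix.diagonal d) *ᵥ x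
      = star ((Matrix.diagonal d) *ᵥ x) ⬝ᵥ M *ᵥ ((Matrix.diagonal d) *ᵥ x) := by
    rw [← mulVec_mulVec, ← mulVec_mulVec, star_trivial, star_trivial, dotProduct_mulVec]
    congr 1
    ext i
    simp [vecMul_diagonal, mulVec_diagonal, mul_comm]
  rw [key]
  exact hM.dotProduct_mulVec_pos hDx

/-- Weighted AM-HM inequality for positive definite matrices (Proposition 1.6):
with `Ã = (a_{mk} l_m l_k)`, `B̃ = (b_{mk} r_m r_k)` and `s_i` the weighted harmonic
mean of `l_i` and `r_i`, one has `((1-t)Ã⁻¹ + tB̃⁻¹)⁻¹ ≤ (((1-t)a_{mk}+t b_{mk}) s_m s_k)`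
in the Loewner order. -/
theorem stmt3 (n : ℕ) (hn : 1 ≤ n) (A B : Matrix (Fin n) (Fin n) ℝ)
    (hA : A.PosDef) (hB : B.PosDef) (t : ℝ) (ht : t ∈ Set.Ioo (0 : ℝ) 1)
    (l r : Fin n → ℝ) (hl : ∀ i, 0 < l i) (hr : ∀ i, 0 < r i) :
    ((Matrix.of fun m k : Fin n => ((1 - t) * A m k + t * B m k) *
          ((1 - t) / l m + t / r m)⁻¹ * ((1 - t) / l k + t / r k)⁻¹) -
        ((1 - t) • (Matrix.of fun m k : Fin n => A m k * l m * l k)⁻¹ +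
          t • (Matrix.of fun m k : Fin n => B m k * r m * r k)⁻¹)⁻¹).PosSemidef := by
  obtain ⟨ht0, ht1⟩ := ht
  have ht' : 0 < 1 - t := by linarith
  set s : Fin n → ℝ := fun i => ((1 - t) / l i + t / r i)⁻¹ with hs
  have hss : ∀ i, (0:ℝ) < (1 - t) / l i + t / r i := fun i =>
    add_pos (div_pos ht' (hl i)) (div_pos ht0 (hr i))
  have hspos : ∀ i, 0 < s i := fun i => inv_pos.mpr (hss i)
  set Dl := Matrix.diagonal l with hDl
  set Dr := Matrix.diagonal r with hDr
  set S := Matrix.diagonal s with hS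
  have hAt : (Matrix.of fun m k : Fin n => A m k * l m * l k) = Dl * A * Dl := by
    ext m k
    simp only [Matrix.of_apply, hDl, Matrix.mul_diagonal, Matrix.diagonal_mul]
    ring
  have hBt : (Matrix.of fun m k : Fin n => B m k * r m * r k) = Dr * B * Dr := by
    ext m k
    simp only [Matrix.of_apply, hDr, Matrix.mul_diagonal, Matrix.diagonal_mul]
    ring
  rw [hAt, hBt]
  have hAtil : (Dl * A * Dl).PosDef := aux_diag_mul_mul_posDef hA hl
  have hBtil : (Dr * B * Dr).PosDef := aux_diag_mul_mul_posDef hB hr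
  have hH : ((1 - t) • (Dl * A * Dl)⁻¹ + t • (Dr * B * Dr)⁻¹).PosDef :=
    (aux_smul_posDef ht' hAtil.inv).add (aux_smul_posDef ht0 hBtil.inv)
  set H := (1 - t) • (Dl * A * Dl)⁻¹ + t • (Dr * B * Dr)⁻¹ with hHdef
  set C := (Matrix.of fun m k : Fin n => ((1 - t) * A m k + t * B m k) * s m * s k) with hCdef
  show (C - H⁻¹).PosSemidef
  haveI : Invertible H := hH.isUnit.invertible
  have hSchur := Matrix.PosDef.fromBlocks₁₁ (1 : Matrix (Fin n) (Fin n) ℝ) C hH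
  simp only [conjTranspose_one, Matrix.mul_one, Matrix.one_mul] at hSchur
  have hkey : (Matrix.fromBlocks H 1 1 C).PosSemidef := by
    set Y₁ := Matrix.diagonal (fun i => s i / l i) with hY1
    set Y₂ := Matrix.diagonal (fun i => s i / r i) with hY2
    have hY1H : Y₁ᴴ = Y₁ := by simp [hY1, diagonal_conjTranspose]
    have hY2H : Y₂ᴴ = Y₂ := by simp [hY2, diagonal_conjTranspose]
    have hSAS : Y₁ * (Dl * A * Dl) * Y₁ = S * A * S := by
      have h1 : Y₁ * Dl = S := by
        rw [hY1, hDl, diagonal_mul_diagonal, hS]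
        exact congrArg Matrix.diagonal (funext fun i => div_mul_cancel₀ _ (hl i).ne')
      have h2 : Dl * Y₁ = S := by
        rw [hY1, hDl, diagonal_mul_diagonal, hS]
        exact congrArg Matrix.diagonal (funext fun i => by
          rw [mul_comm]; exact div_mul_cancel₀ _ (hl i).ne')
      calc Y₁ * (Dl * A * Dl) * Y₁ = (Y₁ * Dl) * A * (Dl * Y₁) := by
            simp only [Matrix.mul_assoc]
        _ = S * A * S := by rw [h1, h2]
    have hSBS : Y₂ * (Dr * B * Dr) * Y₂ = S * B * S := by
      have h1 : Y₂ * Dr = S := by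
        rw [hY2, hDr, diagonal_mul_diagonal, hS]
        exact congrArg Matrix.diagonal (funext fun i => div_mul_cancel₀ _ (hr i).ne')
      have h2 : Dr * Y₂ = S := by
        rw [hY2, hDr, diagonal_mul_diagonal, hS]
        exact congrArg Matrix.diagonal (funext fun i => by
          rw [mul_comm]; exact div_mul_cancel₀ _ (hr i).ne')
      calc Y₂ * (Dr * B * Dr) * Y₂ = (Y₂ * Dr) * B * (Dr * Y₂) := by
            simp only [Matrix.mul_assoc]
        _ = S * B * S := by rw [h1, h2]
    have hF1 : (Matrix.fromBlocks (Dl * A * Dl)⁻¹ Y₁ Y₁ (S * A * S)).PosSemidef := by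
      haveI : Invertible (Dl * A * Dl)⁻¹ := hAtil.inv.isUnit.invertible
      have hiff := Matrix.PosDef.fromBlocks₁₁ Y₁ (S * A * S) hAtil.inv
      rw [hY1H, Matrix.nonsing_inv_nonsing_inv _ (isUnit_iff_ne_zero.mpr hAtil.det_pos.ne')] at hiff
      · rw [hSAS] at hiff
        exact hiff.mpr (by rw [sub_self]; exact Matrix.PosSemidef.zero)
    have hF2 : (Matrix.fromBlocks (Dr * B * Dr)⁻¹ Y₂ Y₂ (S * B * S)).PosSemidef := by
      haveI : Invertible (Dr * B * Dr)⁻¹ := hBtil.inv.isUnit.invertible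
      have hiff := Matrix.PosDef.fromBlocks₁₁ Y₂ (S * B * S) hBtil.inv
      rw [hY2H, Matrix.nonsing_inv_nonsing_inv _ (isUnit_iff_ne_zero.mpr hBtil.det_pos.ne')] at hiff
      · rw [hSBS] at hiff
        exact hiff.mpr (by rw [sub_self]; exact Matrix.PosSemidef.zero)
    have hsum : Matrix.fromBlocks H 1 1 C =
        (1 - t) • Matrix.fromBlocks (Dl * A * Dl)⁻¹ Y₁ Y₁ (S * A * S) +
          t • Matrix.fromBlocks (Dr * B * Dr)⁻¹ Y₂ Y₂ (S * B * S) := by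
      rw [Matrix.fromBlocks_smul, Matrix.fromBlocks_smul, Matrix.fromBlocks_add]
      have hoff : (1 - t) • Y₁ + t • Y₂ = (1 : Matrix (Fin n) (Fin n) ℝ) := by
        ext i j
        rcases eq_or_ne i j with rfl | hij
        · simp only [Matrix.add_apply, Matrix.smul_apply, hY1, hY2, Matrix.diagonal_apply_eq,
            smul_eq_mul, Matrix.one_apply_eq]
          have h' : (1 - t) * (s i / l i) + t * (s i / r i)
              = s i * ((1 - t) / l i + t / r i) := by ring
          rw [h', hs]
          exact inv_mul_cancel₀ (hss i).ne'
        · simp [hY1, hY2, Matrix.diagonal_apply_ne _ hij, Matrix.one_apply_ne hij]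
      have hbr : (1 - t) • (S * A * S) + t • (S * B * S) = C := by
        ext m k
        simp only [Matrix.add_apply, Matrix.smul_apply, hCdef, Matrix.of_apply, hS,
          Matrix.mul_diagonal, Matrix.diagonal_mul, smul_eq_mul]
        ring
      rw [hoff, hbr]
    rw [hsum]
    exact (aux_smul_posSemidef ht'.le hF1).add (aux_smul_posSemidef ht0.le hF2)
  exact hSchur.mp hkey
end

section
/- Let U ⊆ ℝⁿ be open and convex, and let φ₀, φ₁ : U → ℝ be twice continuously differentiable with positive definite Hessian matrices at every point. Let W ⊆ ℝⁿ × (0,1) be open, and let ξ, η : W → U be maps, differentiable in the t-variable, satisfying for all (x,t) ∈ W: (1−t)·ξ(x,t) + t·η(x,t) = x and ∇φ₀(ξ(x,t)) = ∇φ₁(η(x,t)). Then for each fixed x the map t ↦ ∇φ₀(ξ(x,t)) is differentiable in t, with derivative ∂ₜ[∇φ₀(ξ(x,t))] = ((1−t)·(D²φ₀(ξ(x,t)))⁻¹ + t·(D²φ₁(η(x,t)))⁻¹)⁻¹ · (ξ(x,t) − η(x,t)). In particular, if u : W → ℝ has spatial gradient ∇ₓu(x,t) = ∇φ₀(ξ(x,t))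 on W, then the mixed second derivative satisfies D²ₓₜu(x,t) = ((1−t)·(D²φ₀(ξ(x,t)))⁻¹ + t·(D²φ₁(η(x,t)))⁻¹)⁻¹ (ξ(x,t) − η(x,t)). -/
/-- The gradient of `φ : ℝⁿ → ℝ` at `x`, as the vector of partial derivatives. -/
noncomputable def grad {n : ℕ} (φ : (Fin n → ℝ) → ℝ) (x : Fin n → ℝ) : Fin n → ℝ :=
  fun i => fderiv ℝ φ x (Pi.single i 1)

/-- The Jacobian matrix of a map `g : ℝⁿ → ℝⁿ` at `x`. -/
noncomputable def jacobianMatrix {n : ℕ} (g : (Fin n → ℝ) → Fin n → ℝ)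
    (x : Fin n → ℝ) : Matrix (Fin n) (Fin n) ℝ :=
  Matrix.of fun i j => fderiv ℝ g x (Pi.single j 1) i

/-- The Hessian matrix of `φ : ℝⁿ → ℝ` at `x`. -/
noncomputable def hess {n : ℕ} (φ : (Fin n → ℝ) → ℝ) (x : Fin n → ℝ) :
    Matrix (Fin n) (Fin n) ℝ :=
  jacobianMatrix (grad φ) x

theorem jac_mulVec {n : ℕ} (g : (Fin n → ℝ) → Fin n → ℝ) (x v : Fin n → ℝ) :
    (jacobianMatrix g x).mulVec v = fderiv ℝ g x v := by
  have hv : v = ∑ j, v j • (Pi.single j 1 : Fin n → ℝ) := by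
    funext k
    simp [Finset.sum_apply, Pi.single_apply]
  funext i
  conv_rhs => rw [hv]
  rw [map_sum]
  simp [jacobianMatrix, Matrix.mulVec, dotProduct, Finset.sum_apply, mul_comm]

theorem grad_differentiableAt {n : ℕ} {φ : (Fin n → ℝ) → ℝ} {U : Set (Fin n → ℝ)}
    (hU : IsOpen U) (hφ : ContDiffOn ℝ 2 φ U) {y : Fin n → ℝ} (hy : y ∈ U) :
    DifferentiableAt ℝ (grad φ) y := by
  have h1 : ContDiffAt ℝ 2 φ y := hφ.contDiffAt (hU.mem_nhds hy)
  have h2 : ContDiffAt ℝ 1 (fderiv ℝ φ) y := h1.fderiv_right (by norm_num)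
  have h3 : DifferentiableAt ℝ (fderiv ℝ φ) y := h2.differentiableAt (by norm_num)
  exact differentiableAt_pi.2 fun i => h3.clm_apply (differentiableAt_const _)

theorem posDef_smul {n : ℕ} {M : Matrix (Fin n) (Fin n) ℝ} (hM : M.PosDef) {c : ℝ}
    (hc : 0 < c) : (c • M).PosDef := by
  refine ⟨?_, fun v hv => ?_⟩
  · unfold Matrix.IsHermitian
    rw [Matrix.conjTranspose_smul]
    have ht : M.conjTranspose = M := hM.1.eq
    simp only [ht]
    have : star c = c := rfl
    rw [this]
  · exact (hM.smul hc).2 hv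

/-- Lemma 3.4 of the paper: under the constraints `(1-t)ξ + tη = x` and
`∇φ₀(ξ) = ∇φ₁(η)`, the map `t ↦ ∇φ₀(ξ(x,t))` is differentiable with derivative
`((1-t)(D²φ₀(ξ))⁻¹ + t(D²φ₁(η))⁻¹)⁻¹ (ξ - η)`; in particular the mixed derivative
`D²ₓₜu` of a function `u` with `∇ₓu(x,t) = ∇φ₀(ξ(x,t))` is given by this vector. -/
theorem stmt6 (n : ℕ) (U : Set (Fin n → ℝ)) (hUo : IsOpen U) (hUc : Convex ℝ U)
    (φ₀ φ₁ : (Fin n → ℝ) → ℝ)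
    (hφ₀ : ContDiffOn ℝ 2 φ₀ U) (hφ₁ : ContDiffOn ℝ 2 φ₁ U)
    (hH₀ : ∀ x ∈ U, (hess φ₀ x).PosDef) (hH₁ : ∀ x ∈ U, (hess φ₁ x).PosDef)
    (W : Set ((Fin n → ℝ) × ℝ)) (hWo : IsOpen W)
    (hWt : ∀ p ∈ W, p.2 ∈ Set.Ioo (0 : ℝ) 1)
    (ξ η : (Fin n → ℝ) × ℝ → Fin n → ℝ)
    (hξU : ∀ p ∈ W, ξ p ∈ U) (hηU : ∀ p ∈ W, η p ∈ U)
    (hξd : ∀ p ∈ W, DifferentiableAt ℝ (fun s => ξ (p.1, s)) p.2)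
    (hηd : ∀ p ∈ W, DifferentiableAt ℝ (fun s => η (p.1, s)) p.2)
    (hseg : ∀ p ∈ W, (1 - p.2) • ξ p + p.2 • η p = p.1)
    (hgrad : ∀ p ∈ W, grad φ₀ (ξ p) = grad φ₁ (η p)) :
    ∀ p ∈ W,
      DifferentiableAt ℝ (fun s => grad φ₀ (ξ (p.1, s))) p.2 ∧
      deriv (fun s => grad φ₀ (ξ (p.1, s))) p.2 =
        (((1 - p.2) • (hess φ₀ (ξ p))⁻¹ + p.2 • (hess φ₁ (η p))⁻¹)⁻¹).mulVec
          (ξ p - η p) ∧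
      ∀ u : (Fin n → ℝ) × ℝ → ℝ,
        (∀ q ∈ W, grad (fun y => u (y, q.2)) q.1 = grad φ₀ (ξ q)) →
        deriv (fun s => grad (fun y => u (y, s)) p.1) p.2 =
          (((1 - p.2) • (hess φ₀ (ξ p))⁻¹ + p.2 • (hess φ₁ (η p))⁻¹)⁻¹).mulVec
            (ξ p - η p) := by
  intro p hp
  have ht01 : p.2 ∈ Set.Ioo (0 : ℝ) 1 := hWt p hp
  -- derivatives of the slices
  have hξt : HasDerivAt (fun s => ξ (p.1, s)) (deriv (fun s => ξ (p.1, s)) p.2) p.2 :=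
    (hξd p hp).hasDerivAt
  have hηt : HasDerivAt (fun s => η (p.1, s)) (deriv (fun s => η (p.1, s)) p.2) p.2 :=
    (hηd p hp).hasDerivAt
  set ξ' := deriv (fun s => ξ (p.1, s)) p.2 with hξ'def
  set η' := deriv (fun s => η (p.1, s)) p.2 with hη'def
  -- eventual membership
  have hev : ∀ᶠ s in nhds p.2, (p.1, s) ∈ W := by
    have hop : IsOpen {s : ℝ | (p.1, s) ∈ W} := hWo.preimage (Continuous.prodMk_right p.1)
    exact hop.mem_nhds hp
  -- matrices
  set A₀ := hess φ₀ (ξ p) with hA₀def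
  set A₁ := hess φ₁ (η p) with hA₁def
  have hA₀ : A₀.PosDef := hH₀ _ (hξU p hp)
  have hA₁ : A₁.PosDef := hH₁ _ (hηU p hp)
  have hdet₀ : IsUnit A₀.det := hA₀.det_pos.ne'.isUnit
  have hdet₁ : IsUnit A₁.det := hA₁.det_pos.ne'.isUnit
  -- chain rule for grad φ₀ ∘ ξ
  have hgd₀ : DifferentiableAt ℝ (grad φ₀) (ξ p) := grad_differentiableAt hUo hφ₀ (hξU p hp)
  have hgd₁ : DifferentiableAt ℝ (grad φ₁) (η p) := grad_differentiableAt hUo hφ₁ (hηU p hp)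
  have hG₀ : HasDerivAt (fun s => grad φ₀ (ξ (p.1, s))) (A₀.mulVec ξ') p.2 := by
    have := hgd₀.hasFDerivAt.comp_hasDerivAt p.2 hξt
    rwa [show (fderiv ℝ (grad φ₀) (ξ p)) ξ' = A₀.mulVec ξ' from (jac_mulVec _ _ _).symm] at this
  have hG₁ : HasDerivAt (fun s => grad φ₁ (η (p.1, s))) (A₁.mulVec η') p.2 := by
    have := hgd₁.hasFDerivAt.comp_hasDerivAt p.2 hηt
    rwa [show (fderiv ℝ (grad φ₁) (η p)) η' = A₁.mulVec η' from (jac_mulVec _ _ _).symm] at this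
  -- transfer along the gradient identity
  have heq : (fun s => grad φ₀ (ξ (p.1, s))) =ᶠ[nhds p.2] (fun s => grad φ₁ (η (p.1, s))) :=
    hev.mono fun s hs => hgrad _ hs
  have hG₁' : HasDerivAt (fun s => grad φ₀ (ξ (p.1, s))) (A₁.mulVec η') p.2 :=
    hG₁.congr_of_eventuallyEq heq
  have hGeq : A₀.mulVec ξ' = A₁.mulVec η' := hG₀.unique hG₁'
  -- differentiate the segment identity
  have hseg1 : HasDerivAt (fun s : ℝ => (1 - s) • ξ (p.1, s) + s • η (p.1, s))
      (((1 - p.2) • ξ' + (-1 : ℝ) • ξ (p.1, p.2)) + (p.2 • η' + (1 : ℝ) • η (p.1, p.2))) p.2 :=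
    (HasDerivAt.smul ((hasDerivAt_id p.2).const_sub 1) hξt).add
      (HasDerivAt.smul (hasDerivAt_id p.2) hηt)
  have hevseg : (fun s : ℝ => (1 - s) • ξ (p.1, s) + s • η (p.1, s)) =ᶠ[nhds p.2]
      (fun _ : ℝ => p.1) :=
    hev.mono fun s hs => hseg (p.1, s) hs
  have hconst : HasDerivAt (fun _ : ℝ => p.1)
      (((1 - p.2) • ξ' + (-1 : ℝ) • ξ (p.1, p.2)) + (p.2 • η' + (1 : ℝ) • η (p.1, p.2))) p.2 :=
    hseg1.congr_of_eventuallyEq hevseg.symm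
  have hzero : ((1 - p.2) • ξ' + (-1 : ℝ) • ξ (p.1, p.2)) + (p.2 • η' + (1 : ℝ) • η (p.1, p.2))
      = 0 := hconst.unique (hasDerivAt_const p.2 p.1)
  have hpe : ξ (p.1, p.2) = ξ p := rfl
  have hpe' : η (p.1, p.2) = η p := rfl
  have hcomb : (1 - p.2) • ξ' + p.2 • η' = ξ p - η p := by
    funext i
    have hi := congrFun hzero i
    simp [hpe, hpe'] at hi
    simp
    linarith
  -- the combined matrix
  set M := (1 - p.2) • A₀⁻¹ + p.2 • A₁⁻¹ with hMdef
  have hM : M.PosDef :=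
    (posDef_smul hA₀.inv (by linarith [ht01.2])).add (posDef_smul hA₁.inv ht01.1)
  have hMdet : IsUnit M.det := hM.det_pos.ne'.isUnit
  have e₀ : A₀⁻¹.mulVec (A₀.mulVec ξ') = ξ' := by
    rw [Matrix.mulVec_mulVec, Matrix.nonsing_inv_mul _ hdet₀, Matrix.one_mulVec]
  have e₁ : A₁⁻¹.mulVec (A₀.mulVec ξ') = η' := by
    rw [hGeq, Matrix.mulVec_mulVec, Matrix.nonsing_inv_mul _ hdet₁, Matrix.one_mulVec]
  have hMG : M.mulVec (A₀.mulVec ξ') = ξ p - η p := by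
    rw [hMdef, Matrix.add_mulVec, Matrix.smul_mulVec, Matrix.smul_mulVec, e₀, e₁,
      hcomb]
  have hfinal : M⁻¹.mulVec (ξ p - η p) = A₀.mulVec ξ' := by
    rw [← hMG, Matrix.mulVec_mulVec, Matrix.nonsing_inv_mul _ hMdet, Matrix.one_mulVec]
  refine ⟨hG₀.differentiableAt, ?_, ?_⟩
  · rw [hG₀.deriv]
    exact hfinal.symm
  · intro u hu
    have hequ : (fun s => grad (fun y => u (y, s)) p.1) =ᶠ[nhds p.2]
        (fun s => grad φ₀ (ξ (p.1, s))) :=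
      hev.mono fun s hs => hu (p.1, s) hs
    rw [hequ.deriv_eq, hG₀.deriv]
    exact hfinal.symm
end
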